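/- For every positive integer n, Σ_{w=0}^n C(n,w)·|n − 2w| = 2n·C(n−1, ⌊n/2⌋), where C(·,·) denotes the binomial coefficient. -/

import Mathlib

open Finset

/-- Key identity: `n * C(n-1, j+1) - n * C(n-1, j) = (n - 2(j+1)) * C(n, j+1)` in ℤ. -/
lemma key_id (n j : ℕ) (hn : 0 < n) :
    (n : ℤ) * ((n - 1).choose (j + 1)) - n * ((n - 1).choose j)
      = ((n : ℤ) - 2 * ((j : ℤ) + 1)) * (n.choose (j + 1)) := by
  have hnn : n - 1 + 1 = n := by omega
  by_cases h : j + 1 ≤ n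
  · have h1' : (n - 1).choose (j + 1) * n = n.choose (j + 1) * (n - (j + 1)) := by
      have := Nat.choose_mul_succ_eq (n - 1) (j + 1)
      rwa [hnn] at this
    have h2 : n * (n - 1).choose j = n.choose (j + 1) * (j + 1) := by
      have := Nat.add_one_mul_choose_eq (n - 1) j
      rw [hnn] at this
      exact this
    have c1 : ((n : ℤ)) * ((n - 1).choose (j + 1)) = (n.choose (j + 1) : ℤ) * ((n : ℤ) - ((j : ℤ) + 1)) := by
      have := congrArg (fun x : ℕ => (x : ℤ)) h1'
      push_cast [Nat.cast_sub h] at this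
      linarith
    have c2 : ((n : ℤ)) * ((n - 1).choose j) = (n.choose (j + 1) : ℤ) * ((j : ℤ) + 1) := by
      exact_mod_cast congrArg (fun x : ℕ => (x : ℤ)) h2
    rw [c1, c2]; ring
  · push_neg at h
    have e1 : n.choose (j + 1) = 0 := Nat.choose_eq_zero_of_lt h
    have e2 : (n - 1).choose (j + 1) = 0 := Nat.choose_eq_zero_of_lt (by omega)
    have e3 : (n - 1).choose j = 0 := Nat.choose_eq_zero_of_lt (by omega)
    rw [e1, e2, e3]; simp

lemma choose_inc (N j : ℕ) (h : 2 * j + 1 ≤ N) : N.choose j ≤ N.choose (j + 1) := by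
  have heq := Nat.choose_succ_right_eq N j
  have hj : j + 1 ≤ N - j := by omega
  nlinarith [Nat.choose_pos (show j ≤ N by omega), Nat.choose_pos (show j + 1 ≤ N by omega)]

lemma choose_dec (N j : ℕ) (h : N ≤ 2 * j + 1) : N.choose (j + 1) ≤ N.choose j := by
  have heq := Nat.choose_succ_right_eq N j
  have hj : N - j ≤ j + 1 := by omega
  nlinarith [Nat.zero_le (N.choose j)]

/-- Binomial identity: `∑_{w=0}^n C(n,w) |n - 2w| = 2n C(n-1, ⌊n/2⌋)`. -/
theorem stmt_15 (n : ℕ) (hn : 0 < n) :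
    ∑ w ∈ Finset.range (n + 1), (n.choose w : ℤ) * |(n : ℤ) - 2 * w|
      = 2 * n * ((n - 1).choose (n / 2)) := by
  set N := n - 1 with hN
  set m := n / 2 with hm
  set g : ℕ → ℤ := fun j => (N.choose j : ℤ) with hg
  have hmn : m ≤ n := Nat.div_le_self n 2
  have hterm : ∀ j : ℕ, (n.choose (j + 1) : ℤ) * |(n : ℤ) - 2 * ((j : ℤ) + 1)|
      = n * |g (j + 1) - g j| := by
    intro j
    have hkey := key_id n j hn
    have hC : (0:ℤ) ≤ (n.choose (j+1):ℤ) := by positivity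
    have hmid : ((n : ℤ) - 2 * ((j : ℤ) + 1)) * (n.choose (j + 1))
        = (n : ℤ) * (g (j + 1) - g j) := by
      simp only [hg, hN]
      linarith
    calc (n.choose (j + 1) : ℤ) * |(n : ℤ) - 2 * ((j : ℤ) + 1)|
        = |((n : ℤ) - 2 * ((j : ℤ) + 1)) * (n.choose (j + 1))| := by
          rw [abs_mul, abs_of_nonneg hC]; ring
      _ = |(n : ℤ) * (g (j + 1) - g j)| := by rw [hmid]
      _ = n * |g (j + 1) - g j| := by
          rw [abs_mul, abs_of_nonneg (by positivity : (0:ℤ) ≤ (n:ℤ))]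
  rw [Finset.sum_range_succ']
  have h0 : (n.choose 0 : ℤ) * |(n : ℤ) - 2 * (0:ℕ)| = n := by
    simp [abs_of_nonneg (by positivity : (0:ℤ) ≤ (n:ℤ))]
  rw [h0]
  have hsum : ∑ j ∈ Finset.range n, (n.choose (j + 1) : ℤ) * |(n : ℤ) - 2 * (j + 1 : ℕ)|
      = ∑ j ∈ Finset.range n, (n : ℤ) * |g (j + 1) - g j| := by
    apply Finset.sum_congr rfl
    intro j _
    push_cast
    exact hterm j
  rw [hsum, ← Finset.sum_range_add_sum_Ico _ hmn]
  have hinc : ∑ j ∈ Finset.range m, (n : ℤ) * |g (j + 1) - g j|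
      = n * (g m - 1) := by
    rw [← Finset.mul_sum]
    congr 1
    have habs : ∀ j ∈ Finset.range m, |g (j + 1) - g j| = g (j + 1) - g j := by
      intro j hj
      rw [Finset.mem_range] at hj
      have : N.choose j ≤ N.choose (j + 1) := choose_inc N j (by omega)
      rw [abs_of_nonneg]
      simp only [hg, sub_nonneg]
      exact_mod_cast this
    rw [Finset.sum_congr rfl habs, Finset.sum_range_sub]
    simp [hg]
  have hdec : ∑ j ∈ Finset.Ico m n, (n : ℤ) * |g (j + 1) - g j|
      = n * g m := by
    rw [← Finset.mul_sum]
    congr 1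
    have habs : ∀ j ∈ Finset.Ico m n, |g (j + 1) - g j| = g j - g (j + 1) := by
      intro j hj
      rw [Finset.mem_Ico] at hj
      have : N.choose (j + 1) ≤ N.choose j := choose_dec N j (by omega)
      rw [abs_of_nonpos]
      · ring
      simp only [hg, sub_nonpos]
      exact_mod_cast this
    rw [Finset.sum_congr rfl habs, Finset.sum_Ico_eq_sum_range]
    have htel : ∑ i ∈ Finset.range (n - m), (g (m + (i + 1)) - g (m + i))
        = g (m + (n - m)) - g (m + 0) := Finset.sum_range_sub (fun i => g (m + i)) (n - m)
    have hgn : g (m + (n - m)) = 0 := by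
      rw [show m + (n - m) = n by omega]
      simp only [hg]
      norm_cast
      exact Nat.choose_eq_zero_of_lt (by omega)
    calc ∑ i ∈ Finset.range (n - m), (g (m + i) - g (m + i + 1))
        = -∑ i ∈ Finset.range (n - m), (g (m + (i + 1)) - g (m + i)) := by
          rw [← Finset.sum_neg_distrib]
          exact Finset.sum_congr rfl fun i _ => by rw [← add_assoc]; ring
      _ = -(g (m + (n - m)) - g (m + 0)) := by rw [htel]
      _ = g m := by rw [hgn, add_zero]; ring
  rw [hinc, hdec]
  simp only [hg]
  ring
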